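/- If an invertible real D×D matrix M is such that ηMᵗηM has no negative real eigenvalues, then M can be decomposed as M = λs with λ a Lorentz matrix (λᵗηλ = η) and s a symmetric matrix. -/

import Mathlib

open Polynomial Matrix

/-- Base case: a prime real polynomial whose complex root avoids `(-∞,0]`
admits a square root of `X` modulo itself. -/
lemma sqrt_base (f : ℝ[X]) (hf : Prime f) (z : ℂ)
    (hz : (f.map (algebraMap ℝ ℂ)).IsRoot z)
    (hcond : ¬(z.im = 0 ∧ z.re ≤ 0)) :
    ∃ q : ℝ[X], f ∣ q * q - X ∧ ¬ f ∣ q := by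
  have haevf : Polynomial.aeval z f = 0 := by
    rwa [Polynomial.aeval_def, ← Polynomial.eval_map]
  -- construct q₀ with (aeval z q₀)^2 = z
  obtain ⟨q₀, hq₀⟩ : ∃ q₀ : ℝ[X], (Polynomial.aeval z) q₀ * (Polynomial.aeval z) q₀ = z := by
    by_cases him : z.im = 0
    · have hre : 0 < z.re := by
        by_contra h
        exact hcond ⟨him, le_of_not_gt h⟩
      refine ⟨C (Real.sqrt z.re), ?_⟩
      rw [Polynomial.aeval_C]
      have : (algebraMap ℝ ℂ) (Real.sqrt z.re) = (Real.sqrt z.re : ℂ) := rfl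
      rw [this, ← Complex.ofReal_mul, Real.mul_self_sqrt hre.le]
      exact Complex.ext (by simp) (by simp [him])
    · obtain ⟨w, hw⟩ := IsAlgClosed.exists_pow_nat_eq z (n := 2) (by norm_num)
      set b := w.im / z.im with hb
      set a := w.re - b * z.re with ha
      refine ⟨C a + C b * X, ?_⟩
      have hval : (Polynomial.aeval z) (C a + C b * X) = w := by
        simp only [_root_.map_add, _root_.map_mul, Polynomial.aeval_C, Polynomial.aeval_X]
        have h1 : (algebraMap ℝ ℂ) a = (a : ℂ) := rfl
        have h2 : (algebraMap ℝ ℂ) b = (b : ℂ) := rfl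
        rw [h1, h2]
        apply Complex.ext
        · simp only [Complex.add_re, Complex.mul_re, Complex.ofReal_re, Complex.ofReal_im]
          rw [ha]; ring
        · simp only [Complex.add_im, Complex.mul_im, Complex.ofReal_re, Complex.ofReal_im]
          rw [hb]; field_simp; ring
      rw [hval, ← sq, hw]
  have hne : (Polynomial.aeval z) q₀ ≠ 0 := by
    intro h
    rw [h, mul_zero] at hq₀
    exact hcond ⟨by simp [← hq₀], by simp [← hq₀]⟩
  refine ⟨q₀, ?_, ?_⟩
  · by_contra hdvd
    have hcop : IsCoprime f (q₀ * q₀ - X) := (hf.coprime_iff_not_dvd).mpr hdvd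
    obtain ⟨u, v, huv⟩ := hcop
    have := congrArg (Polynomial.aeval z) huv
    simp only [_root_.map_add, _root_.map_mul, _root_.map_sub, Polynomial.aeval_X, _root_.map_one, haevf, mul_zero, hq₀] at this
    simp at this
  · intro hdvd
    obtain ⟨t, ht⟩ := hdvd
    have : (Polynomial.aeval z) q₀ = 0 := by
      rw [ht, _root_.map_mul, haevf, zero_mul]
    exact hne this

/-- Hensel lifting step: square roots of X mod `f` lift to mod `f^(j+1)`. -/
lemma sqrt_lift (f : ℝ[X]) (hf : Prime f) (q₁ : ℝ[X])
    (h1 : f ∣ q₁ * q₁ - X) (hq1 : ¬ f ∣ q₁) :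
    ∀ j : ℕ, ∃ q : ℝ[X], f ^ (j + 1) ∣ q * q - X ∧ ¬ f ∣ q := by
  intro j
  induction j with
  | zero => exact ⟨q₁, by simpa using h1, hq1⟩
  | succ k ih =>
    obtain ⟨q, hk, hq⟩ := ih
    have h2q : ¬ f ∣ 2 * q := by
      intro h
      rcases hf.dvd_or_dvd h with h2 | h2
      · have h2u : IsUnit (2 : ℝ[X]) := by
          rw [show (2 : ℝ[X]) = C 2 from (map_ofNat Polynomial.C 2).symm]
          exact Polynomial.isUnit_C.mpr (by norm_num)
        exact hf.not_unit (isUnit_of_dvd_unit h2 h2u)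
      · exact hq h2
    have hcop : IsCoprime f (2 * q) := hf.coprime_iff_not_dvd.mpr h2q
    obtain ⟨u, v, huv⟩ := hcop
    obtain ⟨w, hw⟩ := hk
    set c : ℝ[X] := -(v * w) with hc
    refine ⟨q + c * f ^ (k + 1), ?_, ?_⟩
    · have e1 : (q + c * f ^ (k + 1)) * (q + c * f ^ (k + 1)) - X
          = f ^ (k + 1) * (w + 2 * q * c) + (c * c) * (f ^ (k + 1) * f ^ (k + 1)) := by
        linear_combination hw
      have e2 : w + 2 * q * c = f * (u * w) := by
        rw [hc]; linear_combination (-w) * huv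
      rw [e1, e2]
      apply dvd_add
      · exact ⟨u * w, by ring⟩
      · apply Dvd.dvd.mul_left
        have : f ^ (k + 1 + 1) ∣ f ^ (k + 1 + (k + 1)) := pow_dvd_pow f (by omega)
        simpa [pow_add] using this
    · intro h
      apply hq
      have hcf : f ∣ c * f ^ (k + 1) := Dvd.dvd.mul_left (dvd_pow_self f (Nat.succ_ne_zero k)) c
      have h' : f ∣ c * f ^ (k + 1) + q := by rwa [add_comm] at h
      exact (dvd_add_right hcf).mp h' 

/-- Main polynomial lemma: if a real polynomial has no complex roots in `(-∞, 0]`,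
then it divides `q*q - X` for some real `q`. -/
lemma exists_sqrt_poly (p : ℝ[X])
    (hp : ∀ z : ℂ, (p.map (algebraMap ℝ ℂ)).IsRoot z → ¬(z.im = 0 ∧ z.re ≤ 0)) :
    ∃ q : ℝ[X], p ∣ q * q - X := by
  induction p using UniqueFactorizationMonoid.induction_on_coprime with
  | h0 =>
    exact absurd (⟨by simp, by norm_num⟩ : ((-1 : ℂ).im = 0 ∧ (-1 : ℂ).re ≤ 0))
      (hp (-1) (by simp [Polynomial.IsRoot]))
  | h1 hx => exact ⟨0, hx.dvd⟩
  | hpr i hf =>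
    rename_i f
    rcases Nat.eq_zero_or_pos i with hi | hi
    · subst hi; exact ⟨0, by simp⟩
    · -- find a complex root of f
      have hf0 : f ≠ 0 := hf.ne_zero
      have hdeg : (f.map (algebraMap ℝ ℂ)).degree ≠ 0 := by
        rw [Polynomial.degree_map]
        intro h
        exact hf.not_unit (Polynomial.isUnit_iff_degree_eq_zero.mpr h)
      obtain ⟨z, hz⟩ := IsAlgClosed.exists_root _ hdeg
      have hzroot : ((f ^ i).map (algebraMap ℝ ℂ)).IsRoot z := by
        rw [Polynomial.map_pow]
        simp only [Polynomial.IsRoot, Polynomial.eval_pow]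
        rw [hz.eq_zero]
        exact zero_pow (by omega)
      have hcond := hp z hzroot
      obtain ⟨q₁, h1, hq1⟩ := sqrt_base f hf z hz hcond
      obtain ⟨q, hdvd, -⟩ := sqrt_lift f hf q₁ h1 hq1 (i - 1)
      refine ⟨q, ?_⟩
      have : i - 1 + 1 = i := by omega
      rwa [this] at hdvd
  | hcp hrel hx hy =>
    rename_i x y
    have hxcond : ∀ z : ℂ, (x.map (algebraMap ℝ ℂ)).IsRoot z → ¬(z.im = 0 ∧ z.re ≤ 0) := by
      intro z hzr
      apply hp z
      simp only [Polynomial.map_mul, Polynomial.IsRoot, Polynomial.eval_mul]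
      rw [hzr.eq_zero, zero_mul]
    have hycond : ∀ z : ℂ, (y.map (algebraMap ℝ ℂ)).IsRoot z → ¬(z.im = 0 ∧ z.re ≤ 0) := by
      intro z hzr
      apply hp z
      simp only [Polynomial.map_mul, Polynomial.IsRoot, Polynomial.eval_mul]
      rw [hzr.eq_zero, mul_zero]
    obtain ⟨qx, hqx⟩ := hx hxcond
    obtain ⟨qy, hqy⟩ := hy hycond
    obtain ⟨u, v, huv⟩ := hrel.isCoprime
    set q : ℝ[X] := qy * (u * x) + qx * (v * y) with hqdef
    refine ⟨q, IsCoprime.mul_dvd hrel.isCoprime ?_ ?_⟩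
    · obtain ⟨tx, htx⟩ := hqx
      refine ⟨tx + 2 * qx * ((qy - qx) * u) + ((qy - qx) * u) * ((qy - qx) * u) * x, ?_⟩
      have hq' : q = qx + ((qy - qx) * u) * x := by
        rw [hqdef]; linear_combination qx * huv
      rw [hq']
      linear_combination htx
    · obtain ⟨ty, hty⟩ := hqy
      refine ⟨ty + 2 * qy * ((qx - qy) * v) + ((qx - qy) * v) * ((qx - qy) * v) * y, ?_⟩
      have hq' : q = qy + ((qx - qy) * v) * y := by
        rw [hqdef]; linear_combination qy * huv
      rw [hq']
      linear_combination hty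


section conj
variable {D : ℕ}

/-- Conjugation by an involution `η` (with `η * η = 1`) as an algebra homomorphism. -/
def conjHom (η : Matrix (Fin D) (Fin D) ℝ) (hη2 : η * η = 1) :
    Matrix (Fin D) (Fin D) ℝ →ₐ[ℝ] Matrix (Fin D) (Fin D) ℝ where
  toFun X := η * X * η
  map_one' := by show η * 1 * η = 1; rw [Matrix.mul_one, hη2]
  map_mul' X Y := by
    have cancel : ∀ Z : Matrix (Fin D) (Fin D) ℝ, Z * η * η = Z := fun Z => by
      rw [Matrix.mul_assoc, hη2, Matrix.mul_one]
    simp only [← Matrix.mul_assoc]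
    rw [cancel (η * X)]
  map_zero' := by simp
  map_add' X Y := by simp [Matrix.mul_add, Matrix.add_mul]
  commutes' r := by
    simp only [Algebra.algebraMap_eq_smul_one]
    rw [Matrix.mul_smul, Matrix.mul_one, Matrix.smul_mul, hη2]

@[simp] lemma conjHom_apply (η : Matrix (Fin D) (Fin D) ℝ) (hη2 : η * η = 1)
    (X : Matrix (Fin D) (Fin D) ℝ) : conjHom η hη2 X = η * X * η := rfl

lemma aeval_transpose (A : Matrix (Fin D) (Fin D) ℝ) (q : ℝ[X]) :
    (Polynomial.aeval A q)ᵀ = Polynomial.aeval Aᵀ q := by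
  induction q using Polynomial.induction_on' with
  | add p r hp hr => simp only [_root_.map_add, Matrix.transpose_add, hp, hr]
  | monomial n a =>
    simp [Polynomial.aeval_monomial, Algebra.algebraMap_eq_smul_one, smul_mul_assoc,
      Matrix.transpose_smul, Matrix.transpose_pow]

end conj

theorem stmt_11 (D : ℕ) (η M : Matrix (Fin D) (Fin D) ℝ)
    (hη : η = Matrix.diagonal (fun i : Fin D => if (i : ℕ) = 0 then (-1 : ℝ) else 1))
    (hM : IsUnit M.det)
    (hneg : ∀ r : ℝ, r < 0 →
      ¬ (((η * Mᵀ * η * M).map (algebraMap ℝ ℂ)).charpoly.IsRoot (r : ℂ))) :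
    ∃ (Λ s : Matrix (Fin D) (Fin D) ℝ), Λᵀ * η * Λ = η ∧ sᵀ = s ∧ M = Λ * s := by
  classical
  -- basic facts about η
  have hη2 : η * η = 1 := by
    rw [hη, Matrix.diagonal_mul_diagonal]
    have : (fun i : Fin D => (if (i : ℕ) = 0 then (-1 : ℝ) else 1)
        * (if (i : ℕ) = 0 then (-1 : ℝ) else 1)) = fun _ => (1 : ℝ) := by
      funext i; split_ifs <;> norm_num
    rw [this, Matrix.diagonal_one]
  have hηT : ηᵀ = η := by rw [hη, Matrix.diagonal_transpose]
  have cancel_left : ∀ X : Matrix (Fin D) (Fin D) ℝ, η * (η * X) = X := fun X => by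
    rw [← Matrix.mul_assoc, hη2, Matrix.one_mul]
  set A : Matrix (Fin D) (Fin D) ℝ := η * Mᵀ * η * M with hA
  have hηdet : IsUnit η.det := Matrix.isUnit_det_of_left_inverse hη2
  have hAdet : IsUnit A.det := by
    have : A.det = η.det * Mᵀ.det * η.det * M.det := by
      rw [hA, Matrix.det_mul, Matrix.det_mul, Matrix.det_mul]
    rw [this, Matrix.det_transpose]
    exact ((hηdet.mul hM).mul hηdet).mul hM
  -- roots of the characteristic polynomial avoid (-∞, 0]
  have hroots : ∀ z : ℂ, (A.charpoly.map (algebraMap ℝ ℂ)).IsRoot z →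
      ¬(z.im = 0 ∧ z.re ≤ 0) := by
    rintro z hz ⟨him, hre⟩
    have hz' : z = (z.re : ℂ) := Complex.ext (by simp) (by simp [him])
    rcases hre.lt_or_eq with hlt | heq
    · refine hneg z.re hlt ?_
      rw [Matrix.charpoly_map]
      rw [hz'] at hz
      exact hz
    · have hz0 : z = 0 := Complex.ext (by simp [heq]) (by simp [him])
      rw [hz0] at hz
      have h0 : (A.charpoly.map (algebraMap ℝ ℂ)).eval 0 = 0 := hz
      rw [← Polynomial.coeff_zero_eq_eval_zero, Polynomial.coeff_map] at h0
      have hc0 : A.charpoly.coeff 0 = 0 := by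
        have : ((A.charpoly.coeff 0 : ℝ) : ℂ) = 0 := h0
        exact_mod_cast this
      have hdet0 : A.det = 0 := by
        rw [Matrix.det_eq_sign_charpoly_coeff, hc0, mul_zero]
      rw [hdet0] at hAdet
      exact hAdet.ne_zero rfl
  obtain ⟨q, hq⟩ := exists_sqrt_poly A.charpoly hroots
  set B : Matrix (Fin D) (Fin D) ℝ := Polynomial.aeval A q with hBdef
  have hBB : B * B = A := by
    obtain ⟨t, ht⟩ := hq
    have h := congrArg (Polynomial.aeval A) ht
    simp only [_root_.map_mul, _root_.map_sub, Polynomial.aeval_X, Matrix.aeval_self_charpoly,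
      zero_mul] at h
    exact sub_eq_zero.mp h
  have hBdet : IsUnit B.det := by
    have : IsUnit (B.det * B.det) := by rw [← Matrix.det_mul, hBB]; exact hAdet
    exact isUnit_of_mul_isUnit_left this
  have hAT : Aᵀ = η * A * η := by
    rw [hA]
    simp only [Matrix.transpose_mul, Matrix.transpose_transpose, hηT, ← Matrix.mul_assoc]
    rw [hη2, Matrix.one_mul]
  have hBT : Bᵀ = η * B * η := by
    rw [hBdef, aeval_transpose, hAT]
    have h := Polynomial.aeval_algHom_apply (conjHom η hη2) A q
    simp only [conjHom_apply] at h
    exact h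
  have hBi : B * B⁻¹ = 1 := Matrix.mul_nonsing_inv B hBdet
  have hBi' : B⁻¹ * B = 1 := Matrix.nonsing_inv_mul B hBdet
  have cancelB : ∀ X : Matrix (Fin D) (Fin D) ℝ, B * (B⁻¹ * X) = X := fun X => by
    rw [← Matrix.mul_assoc, hBi, Matrix.one_mul]
  have cancelBi : ∀ X : Matrix (Fin D) (Fin D) ℝ, B⁻¹ * (B * X) = X := fun X => by
    rw [← Matrix.mul_assoc, hBi', Matrix.one_mul]
  have hBTi : (Bᵀ)⁻¹ = η * B⁻¹ * η := by
    rw [hBT]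
    apply Matrix.inv_eq_right_inv
    simp only [Matrix.mul_assoc]
    rw [cancel_left, cancelB, hη2]
  have h0 : Mᵀ * η * M = η * A := by
    rw [hA]
    simp only [← Matrix.mul_assoc]
    rw [hη2, Matrix.one_mul]
  have hMM' : ∀ X : Matrix (Fin D) (Fin D) ℝ,
      Mᵀ * (η * (M * X)) = η * (B * (B * X)) := fun X => by
    simp only [← Matrix.mul_assoc]
    rw [h0, ← hBB, ← Matrix.mul_assoc η B B]
  refine ⟨M * B⁻¹ * η, η * B, ?_, ?_, ?_⟩
  · -- Lorentz condition
    simp only [Matrix.transpose_mul, Matrix.transpose_nonsing_inv, hηT, hBTi]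
    simp only [Matrix.mul_assoc]
    rw [cancel_left, hMM', cancelB, cancel_left, cancelBi]
  · -- symmetry
    rw [Matrix.transpose_mul, hηT, hBT, Matrix.mul_assoc, Matrix.mul_assoc, hη2,
      Matrix.mul_one]
  · -- decomposition
    simp only [Matrix.mul_assoc]
    rw [cancel_left, hBi', Matrix.mul_one]
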